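/- arXiv:2411.00318 — 4 statements merged into one kernel-verified Lean document; each statement's English description precedes it below -/
import Mathlib

section
/- For the cyclic reformulation of an M-periodic linear system, Ȟ(i) · S_m^i is block diagonal with l×m blocks for every i ≥ 0, and Ȟ(i) · S_m^{i-1} is a cyclic matrix for every i ≥ 1. -/
open Matrix

/-- Block cyclic shift matrix: block (i, i+1 mod M) equals I_q, zeros elsewhere. -/
def cycShift (M q : ℕ) [NeZero M] : Matrix (Fin M × Fin q) (Fin M × Fin q) ℝ :=
  fun a b => if b.1 = a.1 + 1 ∧ b.2 = a.2 then 1 else 0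

/-- Block diagonal: all off-diagonal p×q blocks vanish. -/
def IsBlockDiag {M p q : ℕ} (K : Matrix (Fin M × Fin p) (Fin M × Fin q) ℝ) : Prop :=
  ∀ i j : Fin M, i ≠ j → ∀ s t, K (i, s) (j, t) = 0

/-- Cyclic: the only possibly nonzero blocks are at positions ((j+1) mod M, j). -/
def IsCyclicMat {M p q : ℕ} [NeZero M] (K : Matrix (Fin M × Fin p) (Fin M × Fin q) ℝ) : Prop :=
  ∀ i j : Fin M, i ≠ j + 1 → ∀ s t, K (i, s) (j, t) = 0

/-- Cyclic matrix built from blocks `Bs j` placed at positions ((j+1) mod M, j). -/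
def cycOf {M p q : ℕ} [NeZero M] (Bs : Fin M → Matrix (Fin p) (Fin q) ℝ) :
    Matrix (Fin M × Fin p) (Fin M × Fin q) ℝ :=
  fun a b => if a.1 = b.1 + 1 then Bs b.1 a.2 b.2 else 0

/-- Block diagonal matrix built from diagonal blocks `Ds j`. -/
def bdiagOf {M p q : ℕ} (Ds : Fin M → Matrix (Fin p) (Fin q) ℝ) :
    Matrix (Fin M × Fin p) (Fin M × Fin q) ℝ :=
  fun a b => if a.1 = b.1 then Ds b.1 a.2 b.2 else 0

/-- Markov parameters of the cyclic reformulation. -/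
noncomputable def markovOf {M n m l : ℕ} [NeZero M] (As : Fin M → Matrix (Fin n) (Fin n) ℝ)
    (Bs : Fin M → Matrix (Fin n) (Fin m) ℝ) (Cs : Fin M → Matrix (Fin l) (Fin n) ℝ)
    (Ds : Fin M → Matrix (Fin l) (Fin m) ℝ) : ℕ → Matrix (Fin M × Fin l) (Fin M × Fin m) ℝ
  | 0 => bdiagOf Ds
  | (i + 1) => bdiagOf Cs * (cycOf As) ^ i * cycOf Bs

/-- `K` is shifted by `k`: nonzero blocks only at positions `(j + k, j)`. -/
def Shifted {M p q : ℕ} [NeZero M] (k : Fin M)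
    (K : Matrix (Fin M × Fin p) (Fin M × Fin q) ℝ) : Prop :=
  ∀ i j : Fin M, i ≠ j + k → ∀ s t, K (i, s) (j, t) = 0

open scoped Fin.NatCast Fin.CommRing in
lemma shifted_mul {M p q r : ℕ} [NeZero M] {k k' : Fin M}
    {K : Matrix (Fin M × Fin p) (Fin M × Fin q) ℝ}
    {L : Matrix (Fin M × Fin q) (Fin M × Fin r) ℝ}
    (hK : Shifted k K) (hL : Shifted k' L) : Shifted (k + k') (K * L) := by
  intro i j h s t
  simp only [Matrix.mul_apply]
  apply Finset.sum_eq_zero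
  rintro ⟨c, u⟩ _
  by_cases hc : i = c + k
  · have hcj : c ≠ j + k' := by
      rintro rfl
      exact h (by rw [hc]; ring)
    rw [hL c j hcj, mul_zero]
  · rw [hK i c hc, zero_mul]

lemma shifted_pow {M p : ℕ} [NeZero M] {k : Fin M}
    {K : Matrix (Fin M × Fin p) (Fin M × Fin p) ℝ}
    (hK : Shifted k K) : ∀ i : ℕ, Shifted (i • k) (K ^ i) := by
  intro i
  induction i with
  | zero =>
    intro a b h s t
    rw [pow_zero]
    refine Matrix.one_apply_ne ?_
    simp only [zero_smul, add_zero] at h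
    exact fun he => h (congrArg Prod.fst he)
  | succ n ih =>
    rw [pow_succ, succ_nsmul]
    exact shifted_mul ih hK

lemma shifted_congr {M p q : ℕ} [NeZero M] {k k' : Fin M}
    {K : Matrix (Fin M × Fin p) (Fin M × Fin q) ℝ}
    (hK : Shifted k K) (h : k = k') : Shifted k' K := h ▸ hK

lemma shifted_bdiag {M p q : ℕ} [NeZero M] (Ds : Fin M → Matrix (Fin p) (Fin q) ℝ) :
    Shifted 0 (bdiagOf Ds) := by
  intro i j h s t
  simp only [add_zero] at h
  simp [bdiagOf, h]

lemma shifted_cyc {M p q : ℕ} [NeZero M] (Bs : Fin M → Matrix (Fin p) (Fin q) ℝ) :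
    Shifted 1 (cycOf Bs) := by
  intro i j h s t
  simp [cycOf, h]

open scoped Fin.NatCast Fin.CommRing in
lemma shifted_cycShift {M q : ℕ} [NeZero M] :
    Shifted (-1) (cycShift M q) := by
  intro i j h s t
  simp only [cycShift, ite_eq_right_iff, and_imp]
  intro hj _
  exact absurd (by rw [hj]; ring) h

open scoped Fin.NatCast Fin.CommRing in
lemma shifted_markov {M n m l : ℕ} [NeZero M] (As : Fin M → Matrix (Fin n) (Fin n) ℝ)
    (Bs : Fin M → Matrix (Fin n) (Fin m) ℝ) (Cs : Fin M → Matrix (Fin l) (Fin n) ℝ)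
    (Ds : Fin M → Matrix (Fin l) (Fin m) ℝ) (i : ℕ) :
    Shifted (i : Fin M) (markovOf As Bs Cs Ds i) := by
  cases i with
  | zero => exact shifted_congr (shifted_bdiag Ds) (by simp)
  | succ n =>
    refine shifted_congr
      (shifted_mul (shifted_mul (shifted_bdiag Cs) (shifted_pow (shifted_cyc As) n))
        (shifted_cyc Bs)) ?_
    simp [nsmul_eq_mul]

theorem stmt8 (M n m l : ℕ) [NeZero M] (As : Fin M → Matrix (Fin n) (Fin n) ℝ)
    (Bs : Fin M → Matrix (Fin n) (Fin m) ℝ) (Cs : Fin M → Matrix (Fin l) (Fin n) ℝ)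
    (Ds : Fin M → Matrix (Fin l) (Fin m) ℝ) :
    (∀ i : ℕ, IsBlockDiag (markovOf As Bs Cs Ds i * (cycShift M m) ^ i)) ∧
    (∀ i : ℕ, IsCyclicMat (markovOf As Bs Cs Ds (i + 1) * (cycShift M m) ^ i)) := by
  have hS : ∀ i : ℕ, Shifted (i • (-1 : Fin M)) ((cycShift M m) ^ i) :=
    shifted_pow shifted_cycShift
  constructor
  · intro i a b hab s t
    open scoped Fin.NatCast Fin.CommRing in have h0 : ((i : Fin M) + i • (-1 : Fin M)) = 0 := by simp [nsmul_eq_mul]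
    exact shifted_congr (shifted_mul (shifted_markov As Bs Cs Ds i) (hS i)) h0 a b
      (by simpa using hab) s t
  · intro i a b hab s t
    open scoped Fin.NatCast Fin.CommRing in have h1 : (((i + 1 : ℕ) : Fin M) + i • (-1 : Fin M)) = 1 := by simp [nsmul_eq_mul]
    exact shifted_congr (shifted_mul (shifted_markov As Bs Cs Ds (i + 1)) (hS i)) h1 a b hab s t
end

section
/- For the cyclic reformulation of an M-periodic linear system, S_l^i · Ȟ(i+j) · S_m^j is block diagonal with l×m blocks for all i, j ≥ 0, and S_l^i · Ȟ(i+j) · S_m^{j-1} is a cyclic matrix for all i ≥ 0 and j ≥ 1. -/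
open Matrix

open scoped Fin.NatCast Fin.CommRing

/-- Support is confined to blocks with row index = column index + c. -/
def IsShift {M p q : ℕ} [NeZero M] (c : Fin M)
    (K : Matrix (Fin M × Fin p) (Fin M × Fin q) ℝ) : Prop :=
  ∀ a b, a.1 ≠ b.1 + c → K a b = 0

lemma IsShift.mul {M p q r : ℕ} [NeZero M] {c d : Fin M}
    {K : Matrix (Fin M × Fin p) (Fin M × Fin q) ℝ}
    {L : Matrix (Fin M × Fin q) (Fin M × Fin r) ℝ}
    (hK : IsShift c K) (hL : IsShift d L) : IsShift (c + d) (K * L) := by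
  intro a b h
  rw [Matrix.mul_apply]
  apply Finset.sum_eq_zero
  intro x _
  by_cases hx : a.1 = x.1 + c
  · have hx2 : x.1 ≠ b.1 + d := by
      intro h2
      apply h
      rw [hx, h2]; ring
    rw [hL x b hx2, mul_zero]
  · rw [hK a x hx, zero_mul]

lemma IsShift.one {M q : ℕ} [NeZero M] :
    IsShift (0 : Fin M) (1 : Matrix (Fin M × Fin q) (Fin M × Fin q) ℝ) := by
  intro a b h
  rw [Matrix.one_apply_ne]
  intro he; exact h (by rw [he, add_zero])

lemma isShift_bdiagOf {M p q : ℕ} [NeZero M] (Ds : Fin M → Matrix (Fin p) (Fin q) ℝ) :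
    IsShift (0 : Fin M) (bdiagOf Ds) := by
  intro a b h
  rw [bdiagOf, if_neg]
  intro he; exact h (by rw [he, add_zero])

lemma isShift_cycOf {M p q : ℕ} [NeZero M] (Bs : Fin M → Matrix (Fin p) (Fin q) ℝ) :
    IsShift (1 : Fin M) (cycOf Bs) := by
  intro a b h
  exact if_neg h

lemma isShift_cycOf_pow {M p : ℕ} [NeZero M] (As : Fin M → Matrix (Fin p) (Fin p) ℝ) (i : ℕ) :
    IsShift ((i : Fin M)) ((cycOf As) ^ i) := by
  induction i with
  | zero => simpa using IsShift.one
  | succ k ih =>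
      rw [pow_succ]
      have := ih.mul (isShift_cycOf As)
      simpa using this

lemma isShift_markovOf {M n m l : ℕ} [NeZero M] (As : Fin M → Matrix (Fin n) (Fin n) ℝ)
    (Bs : Fin M → Matrix (Fin n) (Fin m) ℝ) (Cs : Fin M → Matrix (Fin l) (Fin n) ℝ)
    (Ds : Fin M → Matrix (Fin l) (Fin m) ℝ) (k : ℕ) :
    IsShift ((k : Fin M)) (markovOf As Bs Cs Ds k) := by
  cases k with
  | zero => simpa [markovOf] using isShift_bdiagOf Ds
  | succ i =>
      have := ((isShift_bdiagOf Cs).mul (isShift_cycOf_pow As i)).mul (isShift_cycOf Bs)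
      show IsShift _ (bdiagOf Cs * (cycOf As) ^ i * cycOf Bs)
      have hcast : ((i + 1 : ℕ) : Fin M) = (0 : Fin M) + (i : Fin M) + 1 := by push_cast; ring
      rw [hcast]
      exact this

lemma isShift_cycShift {M q : ℕ} [NeZero M] :
    IsShift (-1 : Fin M) (cycShift M q) := by
  intro a b h
  rw [cycShift, if_neg]
  rintro ⟨h1, -⟩
  exact h (by rw [h1]; ring)

lemma isShift_cycShift_pow {M q : ℕ} [NeZero M] (i : ℕ) :
    IsShift (-(i : Fin M)) ((cycShift M q) ^ i) := by
  induction i with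
  | zero => simpa using IsShift.one
  | succ k ih =>
      rw [pow_succ]
      have := ih.mul (isShift_cycShift (q := q))
      have hcast : (-((k + 1 : ℕ) : Fin M)) = -(k : Fin M) + (-1) := by push_cast; ring
      rw [hcast]
      exact this

theorem stmt9 (M n m l : ℕ) [NeZero M] (As : Fin M → Matrix (Fin n) (Fin n) ℝ)
    (Bs : Fin M → Matrix (Fin n) (Fin m) ℝ) (Cs : Fin M → Matrix (Fin l) (Fin n) ℝ)
    (Ds : Fin M → Matrix (Fin l) (Fin m) ℝ) :
    (∀ i j : ℕ, IsBlockDiag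
        ((cycShift M l) ^ i * markovOf As Bs Cs Ds (i + j) * (cycShift M m) ^ j)) ∧
    (∀ i j : ℕ, IsCyclicMat
        ((cycShift M l) ^ i * markovOf As Bs Cs Ds (i + (j + 1)) * (cycShift M m) ^ j)) := by
  have key : ∀ i j k : ℕ,
      IsShift ((-(i : Fin M)) + (k : Fin M) + (-(j : Fin M)))
        ((cycShift M l) ^ i * markovOf As Bs Cs Ds k * (cycShift M m) ^ j) :=
    fun i j k =>
      ((isShift_cycShift_pow i).mul (isShift_markovOf As Bs Cs Ds k)).mul
        (isShift_cycShift_pow j)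
  constructor
  · intro i j a b hab s t
    have h := key i j (i + j)
    have hc : (-(i : Fin M)) + ((i + j : ℕ) : Fin M) + (-(j : Fin M)) = 0 := by
      push_cast; ring
    rw [hc] at h
    exact h (a, s) (b, t) (by simpa using hab)
  · intro i j a b hab s t
    have h := key i j (i + (j + 1))
    have hc : (-(i : Fin M)) + ((i + (j + 1) : ℕ) : Fin M) + (-(j : Fin M)) = 1 := by
      push_cast; ring
    rw [hc] at h
    exact h (a, s) (b, t) hab
end

section
/- If T ∈ R^{Mn×Mn} is invertible and transforms a system (A*, B*, C*, D*) into cyclic form (i.e., T^{-1} A* T and T^{-1} B* are cyclic, C* T and D* are block diagonal), then for any block diagonal invertible Φ ∈ R^{Mn×Mn} (with n×n blocks), the matrix TΦ also transforms the system into cyclic form: (TΦ)^{-1} A* (TΦ) and (TΦ)^{-1} B* are cyclic, and C* (TΦ) is block diagonal. -/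
open Matrix

lemma bd_mul_cyc {M p q r : ℕ} [NeZero M]
    {P : Matrix (Fin M × Fin p) (Fin M × Fin q) ℝ}
    {Q : Matrix (Fin M × Fin q) (Fin M × Fin r) ℝ}
    (hP : IsBlockDiag P) (hQ : IsCyclicMat Q) : IsCyclicMat (P * Q) := by
  intro i j hij s t
  simp only [Matrix.mul_apply]
  apply Finset.sum_eq_zero
  rintro ⟨k, u⟩ -
  by_cases hk : k = i
  · subst hk; rw [hQ _ _ hij, mul_zero]
  · rw [hP i k (fun h => hk h.symm), zero_mul]

lemma cyc_mul_bd {M p q r : ℕ} [NeZero M]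
    {P : Matrix (Fin M × Fin p) (Fin M × Fin q) ℝ}
    {Q : Matrix (Fin M × Fin q) (Fin M × Fin r) ℝ}
    (hP : IsCyclicMat P) (hQ : IsBlockDiag Q) : IsCyclicMat (P * Q) := by
  intro i j hij s t
  simp only [Matrix.mul_apply]
  apply Finset.sum_eq_zero
  rintro ⟨k, u⟩ -
  by_cases hk : k = j
  · subst hk; rw [hP _ _ hij, zero_mul]
  · rw [hQ _ _ hk, mul_zero]

lemma bd_mul_bd {M p q r : ℕ}
    {P : Matrix (Fin M × Fin p) (Fin M × Fin q) ℝ}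
    {Q : Matrix (Fin M × Fin q) (Fin M × Fin r) ℝ}
    (hP : IsBlockDiag P) (hQ : IsBlockDiag Q) : IsBlockDiag (P * Q) := by
  intro i j hij s t
  simp only [Matrix.mul_apply]
  apply Finset.sum_eq_zero
  rintro ⟨k, u⟩ -
  by_cases hk : k = j
  · subst hk; rw [hP _ _ hij, zero_mul]
  · rw [hQ _ _ hk, mul_zero]

lemma inv_bd {M p : ℕ} {Φ : Matrix (Fin M × Fin p) (Fin M × Fin p) ℝ}
    (hΦd : IsBlockDiag Φ) (hΦ : IsUnit Φ) : IsBlockDiag Φ⁻¹ := by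
  set D : Fin M → Matrix (Fin p) (Fin p) ℝ := fun j s t => Φ (j, s) (j, t) with hD
  have hrep : Φ = (blockDiagonal D).submatrix Prod.swap Prod.swap := by
    ext ⟨a, s⟩ ⟨b, t⟩
    simp only [submatrix_apply, Prod.swap, blockDiagonal_apply]
    by_cases h : a = b
    · subst h; simp [hD]
    · simp [h, hΦd a b h s t]
  have hdet : IsUnit Φ.det := (Matrix.isUnit_iff_isUnit_det Φ).mp hΦ
  have hdetD : ∀ j, IsUnit (D j).det := by
    intro j
    have : Φ.det = ∏ j, (D j).det := by
      rw [hrep]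
      rw [show ((blockDiagonal D).submatrix Prod.swap Prod.swap)
        = (blockDiagonal D).submatrix (Equiv.prodComm (Fin M) (Fin p))
          (Equiv.prodComm (Fin M) (Fin p)) from rfl]
      rw [Matrix.det_submatrix_equiv_self, Matrix.det_blockDiagonal]
    rw [this] at hdet
    rw [isUnit_iff_ne_zero] at hdet ⊢
    exact Finset.prod_ne_zero_iff.mp hdet j (Finset.mem_univ j)
  have hmul : Φ * (blockDiagonal (fun j => (D j)⁻¹)).submatrix Prod.swap Prod.swap = 1 := by
    rw [hrep]
    rw [show (Prod.swap : Fin M × Fin p → Fin p × Fin M)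
      = ⇑(Equiv.prodComm (Fin M) (Fin p)) from rfl]
    rw [Matrix.submatrix_mul_equiv, ← Matrix.blockDiagonal_mul]
    have : (fun j => D j * (D j)⁻¹) = (1 : Fin M → Matrix (Fin p) (Fin p) ℝ) := by
      funext j; exact Matrix.mul_nonsing_inv _ (hdetD j)
    rw [this, blockDiagonal_one, submatrix_one_equiv]
  rw [Matrix.inv_eq_right_inv hmul]
  intro i j hij s t
  simp [blockDiagonal_apply, hij]

theorem stmt15 (M n m l : ℕ) [NeZero M]
    (Astar : Matrix (Fin M × Fin n) (Fin M × Fin n) ℝ)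
    (Bstar : Matrix (Fin M × Fin n) (Fin M × Fin m) ℝ)
    (Cstar : Matrix (Fin M × Fin l) (Fin M × Fin n) ℝ)
    (Dstar : Matrix (Fin M × Fin l) (Fin M × Fin m) ℝ)
    (T : Matrix (Fin M × Fin n) (Fin M × Fin n) ℝ) (hT : IsUnit T)
    (hA : IsCyclicMat (T⁻¹ * Astar * T)) (hB : IsCyclicMat (T⁻¹ * Bstar))
    (hC : IsBlockDiag (Cstar * T)) (hD : IsBlockDiag Dstar)
    (Φ : Matrix (Fin M × Fin n) (Fin M × Fin n) ℝ)
    (hΦd : IsBlockDiag Φ) (hΦ : IsUnit Φ) :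
    IsCyclicMat ((T * Φ)⁻¹ * Astar * (T * Φ)) ∧
    IsCyclicMat ((T * Φ)⁻¹ * Bstar) ∧
    IsBlockDiag (Cstar * (T * Φ)) := by
  have hΦi := inv_bd hΦd hΦ
  rw [Matrix.mul_inv_rev]
  refine ⟨?_, ?_, ?_⟩
  · have : Φ⁻¹ * T⁻¹ * Astar * (T * Φ) = Φ⁻¹ * (T⁻¹ * Astar * T) * Φ := by noncomm_ring
    rw [this]
    exact cyc_mul_bd (bd_mul_cyc hΦi hA) hΦd
  · rw [Matrix.mul_assoc]
    exact bd_mul_cyc hΦi hB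
  · rw [← Matrix.mul_assoc]
    exact bd_mul_bd hC hΦd
end

section
/- For the cyclic reformulation, the block observability-type matrix identity holds: Σ_{j=1}^{n} F̌_j S_l^{j-1} Č Ǎ^{j-1} = diag(X_0, X_1, ..., X_{M-1}), where X_k = F · col(C_{k mod M}, C_{(k+1) mod M} A_{k mod M}, ..., C_{(k+n-1) mod M} A_{(k+n-2) mod M}···A_{k mod M}) and F = [F_1 F_2 ... F_n]. -/
open Matrix
open Fin.NatCast

/-- Product A_{k+j-1} A_{k+j-2} ··· A_k (j factors). -/
noncomputable def prodA {M n : ℕ} [NeZero M] (As : Fin M → Matrix (Fin n) (Fin n) ℝ)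
    (k : Fin M) (j : ℕ) : Matrix (Fin n) (Fin n) ℝ :=
  (((List.range j).map (fun t => As (k + ((j - 1 - t : ℕ) : Fin M)))).prod)

/- ### Auxiliary machinery -/

def blk {M p q : ℕ} (f : Fin M → Fin M) (B : Fin M → Matrix (Fin p) (Fin q) ℝ) :
    Matrix (Fin M × Fin p) (Fin M × Fin q) ℝ :=
  fun a b => if a.1 = f b.1 then B b.1 a.2 b.2 else 0

def blk' {M p q : ℕ} (f : Fin M → Fin M) (B : Fin M → Matrix (Fin p) (Fin q) ℝ) :
    Matrix (Fin M × Fin p) (Fin M × Fin q) ℝ :=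
  fun a b => if b.1 = f a.1 then B a.1 a.2 b.2 else 0

lemma blk'_mul_blk' {M p q r : ℕ} (f g : Fin M → Fin M)
    (B : Fin M → Matrix (Fin p) (Fin q) ℝ) (C : Fin M → Matrix (Fin q) (Fin r) ℝ) :
    blk' f B * blk' g C = blk' (fun k => g (f k)) (fun k => B k * C (f k)) := by
  ext ⟨i, s⟩ ⟨b, t⟩
  simp only [blk', Matrix.mul_apply, Fintype.sum_prod_type, ite_mul, mul_ite, zero_mul,
    mul_zero, Finset.sum_ite_irrel, Finset.sum_const_zero]
  rw [Finset.sum_eq_single (f i)]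
  · simp
  · intro x _ hx; simp [hx]
  · simp

lemma blk_mul_blk {M p q r : ℕ} (f g : Fin M → Fin M)
    (B : Fin M → Matrix (Fin p) (Fin q) ℝ) (C : Fin M → Matrix (Fin q) (Fin r) ℝ) :
    blk f B * blk g C = blk (fun k => f (g k)) (fun k => B (g k) * C k) := by
  ext ⟨i, s⟩ ⟨b, t⟩
  simp [blk, Matrix.mul_apply, Fintype.sum_prod_type, ite_mul, mul_ite]

lemma blk'_mul_blk {M p q r : ℕ} (f : Fin M → Fin M) (hf : Function.Injective f)
    (B : Fin M → Matrix (Fin p) (Fin q) ℝ) (C : Fin M → Matrix (Fin q) (Fin r) ℝ) :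
    blk' f B * blk f C = bdiagOf (fun k => B k * C k) := by
  ext ⟨i, s⟩ ⟨b, t⟩
  simp only [blk, blk', bdiagOf, Matrix.mul_apply, Fintype.sum_prod_type, ite_mul, mul_ite,
    zero_mul, mul_zero, Finset.sum_ite_irrel, Finset.sum_const_zero, Finset.sum_ite_eq,
    Finset.sum_ite_eq', Finset.mem_univ, if_true]
  by_cases h : i = b
  · subst h; simp [Matrix.mul_apply]
  · rw [if_neg (fun hfe : f b = f i => h (hf hfe).symm), if_neg h]

lemma prodA_succ {M n : ℕ} [NeZero M] (As : Fin M → Matrix (Fin n) (Fin n) ℝ) (k : Fin M) (j : ℕ) :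
    prodA As k (j + 1) = As (k + (j : Fin M)) * prodA As k j := by
  unfold prodA
  rw [List.range_succ_eq_map]
  have h : ((fun t => As (k + ((j + 1 - 1 - t : ℕ) : Fin M))) ∘ Nat.succ)
      = fun t => As (k + ((j - 1 - t : ℕ) : Fin M)) := by
    funext t
    have : j - (t + 1) = j - 1 - t := by omega
    simp [Function.comp, this]
  simp only [List.map_cons, List.map_map, List.prod_cons, h]
  norm_num

lemma cycShift_eq (M q : ℕ) [NeZero M] :
    cycShift M q = blk' (· + 1) (fun _ => (1 : Matrix (Fin q) (Fin q) ℝ)) := by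
  ext ⟨i, s⟩ ⟨b, t⟩
  simp [cycShift, blk', Matrix.one_apply, ite_and, eq_comm]

lemma one_eq_blk' (M q : ℕ) :
    (1 : Matrix (Fin M × Fin q) (Fin M × Fin q) ℝ)
      = blk' id (fun _ => (1 : Matrix (Fin q) (Fin q) ℝ)) := by
  ext ⟨i, s⟩ ⟨b, t⟩
  simp [blk', Matrix.one_apply, Prod.ext_iff, ite_and, eq_comm]

lemma cycShift_pow (M q : ℕ) [NeZero M] (j : ℕ) :
    (cycShift M q) ^ j = blk' (· + (j : Fin M)) (fun _ => (1 : Matrix (Fin q) (Fin q) ℝ)) := by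
  induction j with
  | zero => simp; exact one_eq_blk' M q
  | succ j ih =>
      rw [pow_succ, ih, cycShift_eq, blk'_mul_blk']
      have hc : ((j + 1 : ℕ) : Fin M) = (j : Fin M) + 1 := by push_cast; ring
      simp only [one_mul, hc, add_assoc]

lemma cycOf_pow {M n : ℕ} [NeZero M] (As : Fin M → Matrix (Fin n) (Fin n) ℝ) (j : ℕ) :
    (cycOf As) ^ j = blk (· + (j : Fin M)) (fun k => prodA As k j) := by
  induction j with
  | zero =>
      ext ⟨i, s⟩ ⟨b, t⟩
      simp only [pow_zero, blk, prodA, List.range_zero, List.map_nil, List.prod_nil,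
        Nat.cast_zero, add_zero, Matrix.one_apply, Prod.ext_iff]
      by_cases h : i = b
      · subst h; simp [Matrix.one_apply]
      · simp [h]
  | succ j ih =>
      rw [pow_succ', ih]
      have : cycOf As = blk (· + 1) As := rfl
      rw [this, blk_mul_blk]
      ext ⟨i, s⟩ ⟨b, t⟩
      have hc : ((j + 1 : ℕ) : Fin M) = (j : Fin M) + 1 := by push_cast; ring
      simp only [blk, prodA_succ, hc, add_assoc]

lemma bdiagOf_eq_blk' {M p q : ℕ} (Ds : Fin M → Matrix (Fin p) (Fin q) ℝ) :
    bdiagOf Ds = blk' id (fun k => Ds k) := by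
  ext ⟨i, s⟩ ⟨b, t⟩
  simp only [bdiagOf, blk', id]
  by_cases h : i = b
  · subst h; simp
  · rw [if_neg h, if_neg (fun h' => h h'.symm)]

lemma bdiagOf_sum {M p q : ℕ} {ι : Type*} (s : Finset ι)
    (D : ι → Fin M → Matrix (Fin p) (Fin q) ℝ) :
    ∑ j ∈ s, bdiagOf (D j) = bdiagOf (fun k => ∑ j ∈ s, D j k) := by
  ext ⟨i, u⟩ ⟨b, t⟩
  simp only [bdiagOf, Matrix.sum_apply]
  by_cases h : i = b <;> simp [h]

theorem stmt16 (M n l : ℕ) [NeZero M]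
    (As : Fin M → Matrix (Fin n) (Fin n) ℝ) (Cs : Fin M → Matrix (Fin l) (Fin n) ℝ)
    (Fs : Fin n → Matrix (Fin n) (Fin l) ℝ) :
    (∑ j : Fin n,
        bdiagOf (fun _ : Fin M => Fs j) * (cycShift M l) ^ (j : ℕ) * bdiagOf Cs * (cycOf As) ^ (j : ℕ))
      = bdiagOf (fun k : Fin M =>
          ∑ j : Fin n, Fs j * (Cs (k + ((j : ℕ) : Fin M)) * prodA As k (j : ℕ))) := by
  have key : ∀ j : Fin n,
      bdiagOf (fun _ : Fin M => Fs j) * (cycShift M l) ^ (j : ℕ) * bdiagOf Cs * (cycOf As) ^ (j : ℕ)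
        = bdiagOf (fun k => Fs j * (Cs (k + ((j : ℕ) : Fin M)) * prodA As k (j : ℕ))) := by
    intro j
    rw [cycShift_pow, cycOf_pow, bdiagOf_eq_blk' (fun _ => Fs j), bdiagOf_eq_blk' Cs,
      blk'_mul_blk', blk'_mul_blk']
    have hinj : Function.Injective (fun k : Fin M => k + ((j : ℕ) : Fin M)) :=
      fun a b h => by simpa using add_right_cancel h
    simp only [id_eq]
    rw [blk'_mul_blk _ hinj]
    simp only [Matrix.mul_one, Matrix.mul_assoc]
  rw [Finset.sum_congr rfl (fun j _ => key j), bdiagOf_sum]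
end
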